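/- Let {r_p}_{p∈ℤ₊} be a non-decreasing sequence of positive reals tending to +∞. Then there exists a non-decreasing sequence {s_p}_{p∈ℤ₊} of positive reals tending to +∞ with s_p ≤ r_p for all p and the submultiplicativity-type property Π_{j=1}^{m+k} s_j ≤ 2^{m+k} (Π_{j=1}^m s_j)(Π_{j=1}^k s_j) for all m, k ∈ ℤ₊. Consequently, if {A_p} satisfies (M.2) with constants c₀, H, then the modified sequence A_p Π_{j=1}^p s_j satisfies (M.2) with constants c₀ and 2H. -/

import Mathlib

noncomputable def auxSeq16 (r : ℕ → ℝ) : ℕ → ℝ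
  | 0 => r 0
  | p + 1 => min (r (p + 1)) (auxSeq16 r p * (((p : ℝ) + 2) / ((p : ℝ) + 1)))


/-- Every non-decreasing positive sequence `r` tending to `+∞` admits a
subordinate non-decreasing positive sequence `s ≤ r` tending to `+∞` with
`∏_{j=1}^{m+k} s_j ≤ 2^{m+k} (∏_{j=1}^m s_j)(∏_{j=1}^k s_j)`; consequently, if `{A_p}`
satisfies `(M.2)` with constants `c₀, H`, then `A_p ∏_{j=1}^p s_j` satisfies `(M.2)` with
constants `c₀` and `2H`.  (Here `s j` denotes the `(j+1)`-st term `s_{j+1}`, so that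
`∏_{j=1}^m s_j` is `∏ j ∈ Finset.range m, s j`.) -/
theorem stmt_16 (r : ℕ → ℝ) (hrpos : ∀ p, 0 < r p) (hrmono : Monotone r)
    (hrtop : Filter.Tendsto r Filter.atTop Filter.atTop) :
    ∃ s : ℕ → ℝ, (∀ p, 0 < s p) ∧ Monotone s ∧
      Filter.Tendsto s Filter.atTop Filter.atTop ∧ (∀ p, s p ≤ r p) ∧
      (∀ m k : ℕ, (∏ j ∈ Finset.range (m + k), s j) ≤
        2 ^ (m + k) * (∏ j ∈ Finset.range m, s j) * (∏ j ∈ Finset.range k, s j)) ∧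
      (∀ (A : ℕ → ℝ) (c₀ H : ℝ), 1 ≤ c₀ → 1 ≤ H → (∀ p, 0 < A p) →
        (∀ p q : ℕ, A (p + q) ≤ c₀ * H ^ (p + q) * A p * A q) →
        (∀ p q : ℕ, A (p + q) * ∏ j ∈ Finset.range (p + q), s j ≤
          c₀ * (2 * H) ^ (p + q) * (A p * ∏ j ∈ Finset.range p, s j) *
            (A q * ∏ j ∈ Finset.range q, s j))) := by
  set s := auxSeq16 r with hs
  -- basic facts
  have hratio : ∀ p : ℕ, (1 : ℝ) ≤ ((p : ℝ) + 2) / ((p : ℝ) + 1) := by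
    intro p
    rw [le_div_iff₀ (by positivity)]
    linarith
  have hpos : ∀ p, 0 < s p := by
    intro p
    induction p with
    | zero => exact hrpos 0
    | succ n ih =>
      exact lt_min (hrpos _) (by positivity)
  have hler : ∀ p, s p ≤ r p := by
    intro p
    cases p with
    | zero => exact le_refl _
    | succ n => exact min_le_left _ _
  have hstep : ∀ p : ℕ, s (p + 1) ≤ s p * (((p : ℝ) + 2) / ((p : ℝ) + 1)) := by
    intro p; exact min_le_right _ _
  have hmono : Monotone s := by
    apply monotone_nat_of_le_succ
    intro p
    refine le_min ((hler p).trans (hrmono (Nat.le_succ p))) ?_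
    calc s p = s p * 1 := (mul_one _).symm
    _ ≤ s p * (((p : ℝ) + 2) / ((p : ℝ) + 1)) :=
      mul_le_mul_of_nonneg_left (hratio p) (hpos p).le
  -- growth bound: s (m + i) ≤ s i * (m+i+1)/(i+1)
  have hgrow : ∀ i m : ℕ, s (m + i) ≤ s i * (((m : ℝ) + i + 1) / ((i : ℝ) + 1)) := by
    intro i m
    induction m with
    | zero =>
      simp only [Nat.cast_zero, Nat.zero_add, zero_add]
      rw [div_self (by positivity), mul_one]
    | succ n ih =>
      have h1 := hstep (n + i)
      have h2 : s (n + i) * ((((n + i : ℕ) : ℝ) + 2) / (((n + i : ℕ) : ℝ) + 1)) ≤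
          s i * (((n : ℝ) + i + 1) / ((i : ℝ) + 1)) *
            ((((n + i : ℕ) : ℝ) + 2) / (((n + i : ℕ) : ℝ) + 1)) := by
        apply mul_le_mul_of_nonneg_right ih
        positivity
      have h3 : s i * (((n : ℝ) + i + 1) / ((i : ℝ) + 1)) *
            ((((n + i : ℕ) : ℝ) + 2) / (((n + i : ℕ) : ℝ) + 1)) =
          s i * ((((n + 1 : ℕ) : ℝ) + i + 1) / ((i : ℝ) + 1)) := by
        push_cast
        have : ((n : ℝ) + i + 1) ≠ 0 := by positivity
        field_simp
        ring
      have := (h1.trans h2)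
      rw [h3] at this
      calc s (n + 1 + i) = s ((n + i) + 1) := by ring_nf
      _ ≤ _ := this
  -- the nat factorial inequality
  have hfact : ∀ m k : ℕ, ((m + k).factorial : ℝ) ≤ 2 ^ (m + k) * m.factorial * k.factorial := by
    intro m k
    have h1 : (m + k).choose k ≤ 2 ^ (m + k) := by
      have hmem : k ∈ Finset.range (m + k + 1) := Finset.mem_range.mpr (by omega)
      have h := Finset.single_le_sum (f := fun i => (m + k).choose i)
        (fun i _ => Nat.zero_le _) hmem
      rwa [Nat.sum_range_choose] at h
    have h2 := Nat.add_choose_mul_factorial_mul_factorial m k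
    have : (m + k).factorial ≤ 2 ^ (m + k) * m.factorial * k.factorial := by
      calc (m + k).factorial = (m + k).choose k * m.factorial * k.factorial := h2.symm
      _ ≤ 2 ^ (m + k) * m.factorial * k.factorial := by
        exact Nat.mul_le_mul_right _ (Nat.mul_le_mul_right _ h1)
    exact_mod_cast this
  -- product of (m+i+1) over i < k  equals (m+k)!/m!
  have hprodnat : ∀ m k : ℕ, m.factorial * (∏ i ∈ Finset.range k, (m + i + 1)) =
      (m + k).factorial := by
    intro m k
    induction k with
    | zero => simp
    | succ n ih =>
      rw [Finset.prod_range_succ, ← mul_assoc, ih]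
      rw [show m + (n + 1) = (m + n) + 1 by ring, Nat.factorial_succ]
      ring
  -- key product inequality
  have hkey : ∀ m k : ℕ, (∏ j ∈ Finset.range (m + k), s j) ≤
      2 ^ (m + k) * (∏ j ∈ Finset.range m, s j) * (∏ j ∈ Finset.range k, s j) := by
    intro m k
    rw [Finset.prod_range_add]
    have h1 : (∏ i ∈ Finset.range k, s (m + i)) ≤
        ∏ i ∈ Finset.range k, (s i * (((m : ℝ) + i + 1) / ((i : ℝ) + 1))) := by
      apply Finset.prod_le_prod
      · intro i _; exact (hpos _).le
      · intro i _; exact hgrow i m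
    have h2 : (∏ i ∈ Finset.range k, (s i * (((m : ℝ) + i + 1) / ((i : ℝ) + 1)))) =
        (∏ i ∈ Finset.range k, s i) *
          ((∏ i ∈ Finset.range k, ((m : ℝ) + i + 1)) / (∏ i ∈ Finset.range k, ((i : ℝ) + 1))) := by
      rw [Finset.prod_mul_distrib, Finset.prod_div_distrib]
    have h3 : (∏ i ∈ Finset.range k, ((m : ℝ) + i + 1)) / (∏ i ∈ Finset.range k, ((i : ℝ) + 1)) ≤
        2 ^ (m + k) := by
      have hden : (∏ i ∈ Finset.range k, ((i : ℝ) + 1)) = (k.factorial : ℝ) := by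
        rw [← Finset.prod_range_add_one_eq_factorial]
        push_cast
        rfl
      have hnum : (∏ i ∈ Finset.range k, ((m : ℝ) + i + 1)) =
          ∏ i ∈ Finset.range k, ((m + i + 1 : ℕ) : ℝ) := by
        apply Finset.prod_congr rfl
        intro i _; push_cast; ring
      rw [hden, hnum, ← Nat.cast_prod]
      rw [div_le_iff₀ (by positivity)]
      have hmm : (m.factorial : ℝ) > 0 := by positivity
      rw [← mul_le_mul_iff_right₀ hmm]
      calc (m.factorial : ℝ) * ((∏ i ∈ Finset.range k, (m + i + 1) : ℕ) : ℝ) =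
          ((m + k).factorial : ℝ) := by rw [← Nat.cast_mul, hprodnat]
      _ ≤ 2 ^ (m + k) * m.factorial * k.factorial := hfact m k
      _ = (m.factorial : ℝ) * (2 ^ (m + k) * (k.factorial : ℝ)) := by ring
    calc (∏ j ∈ Finset.range m, s j) * (∏ i ∈ Finset.range k, s (m + i)) ≤
        (∏ j ∈ Finset.range m, s j) * ((∏ i ∈ Finset.range k, s i) *
          ((∏ i ∈ Finset.range k, ((m : ℝ) + i + 1)) / (∏ i ∈ Finset.range k, ((i : ℝ) + 1)))) := by
          apply mul_le_mul_of_nonneg_left (h1.trans_eq h2)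
          exact Finset.prod_nonneg fun i _ => (hpos i).le
    _ ≤ (∏ j ∈ Finset.range m, s j) * ((∏ i ∈ Finset.range k, s i) * 2 ^ (m + k)) := by
          apply mul_le_mul_of_nonneg_left _ (Finset.prod_nonneg fun i _ => (hpos i).le)
          apply mul_le_mul_of_nonneg_left h3 (Finset.prod_nonneg fun i _ => (hpos i).le)
    _ = 2 ^ (m + k) * (∏ j ∈ Finset.range m, s j) * (∏ j ∈ Finset.range k, s j) := by ring
  -- tendsto
  have htop : Filter.Tendsto s Filter.atTop Filter.atTop := by
    apply hmono.tendsto_atTop_atTop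
    intro b
    obtain ⟨N, hN⟩ := (hrtop.eventually (Filter.eventually_ge_atTop b)).exists_forall_of_atTop
    have hlow : ∀ q : ℕ, min b (s N * (((N : ℝ) + q + 1) / ((N : ℝ) + 1))) ≤ s (N + q) := by
      intro q
      induction q with
      | zero =>
        simp only [Nat.cast_zero, add_zero]
        rw [div_self (by positivity), mul_one]
        exact min_le_right _ _
      | succ n ih =>
        push_cast
        have hr1 : min b (s N * (((N : ℝ) + (n + 1) + 1) / ((N : ℝ) + 1))) ≤ r (N + (n + 1)) := by
          exact (min_le_left _ _).trans (hN _ (by omega))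
        have hρ : (1 : ℝ) ≤ (((N + n : ℕ) : ℝ) + 2) / (((N + n : ℕ) : ℝ) + 1) := hratio _
        have hr2 : min b (s N * (((N : ℝ) + (n + 1) + 1) / ((N : ℝ) + 1))) ≤
            s (N + n) * ((((N + n : ℕ) : ℝ) + 2) / (((N + n : ℕ) : ℝ) + 1)) := by
          have heq : s N * (((N : ℝ) + n + 1) / ((N : ℝ) + 1)) *
              ((((N + n : ℕ) : ℝ) + 2) / (((N + n : ℕ) : ℝ) + 1)) =
              s N * (((N : ℝ) + (n + 1) + 1) / ((N : ℝ) + 1)) := by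
            push_cast
            have h0 : ((N : ℝ) + n + 1) ≠ 0 := by positivity
            field_simp
            ring
          rcases le_total b (s N * (((N : ℝ) + n + 1) / ((N : ℝ) + 1))) with hcase | hcase
          · -- min in ih is b
            have : b ≤ s (N + n) := le_trans (by simp [min_eq_left hcase]) ih
            calc min b (s N * (((N : ℝ) + (n + 1) + 1) / ((N : ℝ) + 1))) ≤ b := min_le_left _ _
            _ ≤ s (N + n) := this
            _ ≤ s (N + n) * ((((N + n : ℕ) : ℝ) + 2) / (((N + n : ℕ) : ℝ) + 1)) := by
                nlinarith [hpos (N + n)]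
          · have h4 : s N * (((N : ℝ) + n + 1) / ((N : ℝ) + 1)) ≤ s (N + n) :=
              le_trans (by simp [min_eq_right hcase]) ih
            calc min b (s N * (((N : ℝ) + (n + 1) + 1) / ((N : ℝ) + 1))) ≤
                s N * (((N : ℝ) + (n + 1) + 1) / ((N : ℝ) + 1)) := min_le_right _ _
            _ = s N * (((N : ℝ) + n + 1) / ((N : ℝ) + 1)) *
                ((((N + n : ℕ) : ℝ) + 2) / (((N + n : ℕ) : ℝ) + 1)) := heq.symm
            _ ≤ s (N + n) * ((((N + n : ℕ) : ℝ) + 2) / (((N + n : ℕ) : ℝ) + 1)) := by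
                apply mul_le_mul_of_nonneg_right h4
                positivity
        have hsucc : ∀ p : ℕ, s (p + 1) =
            min (r (p + 1)) (s p * (((p : ℝ) + 2) / ((p : ℝ) + 1))) := fun p => rfl
        have heqidx : N + (n + 1) = (N + n) + 1 := by ring
        rw [heqidx, hsucc]
        exact le_min (by rw [← heqidx]; exact hr1) hr2
    -- choose q large
    obtain ⟨q, hq⟩ := exists_nat_ge (b * ((N : ℝ) + 1) / s N)
    refine ⟨N + q, ?_⟩
    have hbig : b ≤ s N * (((N : ℝ) + q + 1) / ((N : ℝ) + 1)) := by
      rw [div_le_iff₀ (hpos N)] at hq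
      rw [← mul_div_assoc, le_div_iff₀ (by positivity : (0:ℝ) < (N : ℝ) + 1)]
      nlinarith [hpos N, Nat.cast_nonneg (α := ℝ) N, Nat.cast_nonneg (α := ℝ) q]
    have := hlow q
    rw [min_eq_left hbig] at this
    exact this
  refine ⟨s, hpos, hmono, htop, hler, hkey, ?_⟩
  intro A c₀ H hc₀ hH hA hM2 p q
  have hP : ∀ n, (0:ℝ) ≤ ∏ j ∈ Finset.range n, s j := fun n =>
    Finset.prod_nonneg fun i _ => (hpos i).le
  have h1 : A (p + q) * ∏ j ∈ Finset.range (p + q), s j ≤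
      (c₀ * H ^ (p + q) * A p * A q) *
        (2 ^ (p + q) * (∏ j ∈ Finset.range p, s j) * (∏ j ∈ Finset.range q, s j)) := by
    apply mul_le_mul (hM2 p q) (hkey p q) (hP _) _
    have := hA p; have := hA q
    positivity
  calc A (p + q) * ∏ j ∈ Finset.range (p + q), s j ≤ _ := h1
  _ = c₀ * (2 * H) ^ (p + q) * (A p * ∏ j ∈ Finset.range p, s j) *
        (A q * ∏ j ∈ Finset.range q, s j) := by
    rw [mul_pow]; ring
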